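/- (Proposition 9) Let τ : (ℕ≥1 → ℂ) → ℂ be a nowhere-vanishing function such that the BKP Pfaffian formulae hold for every n (odd n ≥ 3 and even n ≥ 4) and all admissible parameters. Then the BKP addition formulae hold: for every x and all pairwise distinct α₁,…,αₙ ∈ ℂ with αᵢ + αⱼ ≠ 0 for all i < j, (a) if n is odd, Σ_{i=1}^n (−1)^{i−1}·(τ(x+2[αᵢ]_o)/τ(x))·A_{1…î…n}^{−1}·(τ(x+2Σ_{l≠i}[α_l]_o)/τ(x)) − A_{1…n}^{−1}·(τ(x+2Σ_{l=1}^n[α_l]_o)/τ(x)) = 0, and (b) if n is even, Σ_{i=1}^{n−1}(−1)^{i−1}·(α_{in}/α̃_{in})·(τ(x+2[αᵢ]_o+2[αₙ]_o)/τ(x))·A_{1…î…(n−1)}^{−1}·(τ(x+2Σ_{l≤n−1, l≠i}[α_l]_o)/τ(x)) − A_{1…n}^{−1}·(τ(x+2Σ_{l=1}^n[α_l]_o)/τ(x)) = 0, where î means the index i is omitted. (This follows from the Plücker relations for Pfaffians.) -/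

import Mathlib

open scoped BigOperators

noncomputable section

/-- Sequences `x = (x₁, x₃, x₅, …)` indexed by positive integers, with complex entries. -/
abbrev TSeq : Type := {n : ℕ // 0 < n} → ℂ

/-- `2[α]ₒ`, the sequence whose `n`-th entry is `2α^{2n−1}/(2n−1)`. -/
noncomputable def chB (α : ℂ) : TSeq :=
  fun n => 2 * α ^ (2 * (n : ℕ) - 1) / ((2 * (n : ℕ) - 1 : ℕ) : ℂ)

/-- The four-term equation of the BKP hierarchy. -/
def FourTerm (τ : TSeq → ℂ) : Prop :=
  ∀ (x : TSeq) (α₁ α₂ α₃ : ℂ),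
    (α₁ + α₂) * (α₁ + α₃) * (α₂ - α₃) * τ (x + chB α₁) * τ (x + chB α₂ + chB α₃)
    - (α₁ + α₂) * (α₂ + α₃) * (α₁ - α₃) * τ (x + chB α₂) * τ (x + chB α₁ + chB α₃)
    + (α₁ + α₃) * (α₂ + α₃) * (α₁ - α₂) * τ (x + chB α₃) * τ (x + chB α₁ + chB α₂)
    - (α₁ - α₂) * (α₁ - α₃) * (α₂ - α₃) * τ x * τ (x + chB α₁ + chB α₂ + chB α₃) = 0

/-- The index `2k` in `Fin (2m)`, for `k : Fin m`. -/
def fin2 {m : ℕ} (k : Fin m) : Fin (2*m) := ⟨2 * (k : ℕ), by have := k.isLt; omega⟩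

/-- The index `2k+1` in `Fin (2m)`, for `k : Fin m`. -/
def fin2' {m : ℕ} (k : Fin m) : Fin (2*m) := ⟨2 * (k : ℕ) + 1, by have := k.isLt; omega⟩

/-- The Pfaffian of a `2m × 2m` (skew-symmetric) matrix:
`Pf a = ∑ sgn(σ) ∏_{k=1}^m a_{σ(2k−1) σ(2k)}`, summed over permutations `σ` with
`σ(1) < σ(3) < ⋯ < σ(2m−1)` and `σ(2k−1) < σ(2k)` for all `k`. -/
noncomputable def Pf {R : Type*} [CommRing R] (m : ℕ) (a : Fin (2*m) → Fin (2*m) → R) : R :=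
  ∑ σ ∈ Finset.univ.filter (fun σ : Equiv.Perm (Fin (2*m)) =>
      (∀ k : Fin m, σ (fin2 k) < σ (fin2' k)) ∧
      ∀ k l : Fin m, k < l → σ (fin2 k) < σ (fin2 l)),
    (Equiv.Perm.sign σ : ℤ) • ∏ k : Fin m, a (σ (fin2 k)) (σ (fin2' k))

/-- The entries of the BKP Pfaffians: `(0,j) = τ(x+2[αⱼ]ₒ)/τ(x)` and
`(i,j) = (αᵢ−αⱼ)/(αᵢ+αⱼ) · τ(x+2[αᵢ]ₒ+2[αⱼ]ₒ)/τ(x)`, extended skew-symmetrically;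
the index `0` is encoded as `none` and the index `i ≥ 1` as `some αᵢ`. -/
noncomputable def pt (τ : TSeq → ℂ) (x : TSeq) : Option ℂ → Option ℂ → ℂ
  | none, none => 0
  | none, some b => τ (x + chB b) / τ x
  | some a, none => -(τ (x + chB a) / τ x)
  | some a, some b => (a - b) / (a + b) * (τ (x + chB a + chB b) / τ x)

/-- `A_{1…n} = ∏_{i<j} (αᵢ+αⱼ)/(αᵢ−αⱼ)`. -/
noncomputable def Afun {n : ℕ} (α : Fin n → ℂ) : ℂ :=
  ∏ i, ∏ j ∈ Finset.Ioi i, (α i + α j) / (α i - α j)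

/-- The BKP Pfaffian formula for odd `n = 2m+1`:
`τ(x + 2Σᵢ[αᵢ]ₒ)/τ(x) = A_{1…n} · Pf((i,j))_{0 ≤ i < j ≤ n}`. -/
def BKPPfOdd (τ : TSeq → ℂ) (x : TSeq) (m : ℕ) (α : Fin (2*m+1) → ℂ) : Prop :=
  τ (x + ∑ i, chB (α i)) / τ x =
    Afun α * Pf (m+1) (fun p q =>
      pt τ x
        (Fin.cases none (fun i => some (α i)) (Fin.cast (by omega : 2*(m+1) = 2*m+1+1) p))
        (Fin.cases none (fun i => some (α i)) (Fin.cast (by omega : 2*(m+1) = 2*m+1+1) q)))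

/-- The BKP Pfaffian formula for even `n = 2m`:
`τ(x + 2Σᵢ[αᵢ]ₒ)/τ(x) = A_{1…n} · Pf((i,j))_{1 ≤ i < j ≤ n}`. -/
def BKPPfEven (τ : TSeq → ℂ) (x : TSeq) (m : ℕ) (α : Fin (2*m) → ℂ) : Prop :=
  τ (x + ∑ i, chB (α i)) / τ x =
    Afun α * Pf m (fun p q => pt τ x (some (α p)) (some (α q)))

/-- The BKP addition formula (53) for odd `n = 2m+1`. -/
def BKPAddOdd (τ : TSeq → ℂ) (x : TSeq) (m : ℕ) (α : Fin (2*m+1) → ℂ) : Prop :=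
  ∑ i : Fin (2*m+1), (-1 : ℂ) ^ (i : ℕ) * (τ (x + chB (α i)) / τ x) *
      (Afun (fun j : Fin (2*m) => α (i.succAbove j)))⁻¹ *
      (τ (x + ∑ j : Fin (2*m), chB (α (i.succAbove j))) / τ x)
    - (Afun α)⁻¹ * (τ (x + ∑ i, chB (α i)) / τ x) = 0

/-- The BKP addition formula (54) for even `n = 2m+2`. -/
def BKPAddEven (τ : TSeq → ℂ) (x : TSeq) (m : ℕ) (α : Fin (2*m+2) → ℂ) : Prop :=
  ∑ i : Fin (2*m+1), (-1 : ℂ) ^ (i : ℕ) *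
      ((α i.castSucc - α (Fin.last (2*m+1))) / (α i.castSucc + α (Fin.last (2*m+1)))) *
      (τ (x + chB (α i.castSucc) + chB (α (Fin.last (2*m+1)))) / τ x) *
      (Afun (fun j : Fin (2*m) => α (Fin.castSucc (i.succAbove j))))⁻¹ *
      (τ (x + ∑ j : Fin (2*m), chB (α (Fin.castSucc (i.succAbove j)))) / τ x)
    - (Afun α)⁻¹ * (τ (x + ∑ i, chB (α i)) / τ x) = 0

namespace BKPaux
open Equiv

def gin2 {m : ℕ} (k : Fin (m+1)) : Fin (2*m+1+1) := ⟨2 * (k : ℕ), by have := k.isLt; omega⟩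
def gin2' {m : ℕ} (k : Fin (m+1)) : Fin (2*m+1+1) := ⟨2 * (k : ℕ) + 1, by have := k.isLt; omega⟩

noncomputable def PfS {R : Type*} [CommRing R] (m : ℕ) (a : Fin (2*m+1+1) → Fin (2*m+1+1) → R) : R :=
  ∑ σ ∈ Finset.univ.filter (fun σ : Equiv.Perm (Fin (2*m+1+1)) =>
      (∀ k : Fin (m+1), σ (gin2 k) < σ (gin2' k)) ∧
      ∀ k l : Fin (m+1), k < l → σ (gin2 k) < σ (gin2 l)),
    (Equiv.Perm.sign σ : ℤ) • ∏ k : Fin (m+1), a (σ (gin2 k)) (σ (gin2' k))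

theorem Pf_eq_PfS {R : Type*} [CommRing R] (m : ℕ) (a : Fin (2*(m+1)) → Fin (2*(m+1)) → R) :
    Pf (m+1) a = PfS m (fun p q => a p q) := rfl

-- index lemmas
lemma gin2_zero (m : ℕ) : gin2 (0 : Fin (m+1)) = (0 : Fin (2*m+1+1)) := by
  apply Fin.ext; simp [gin2]
lemma gin2'_zero (m : ℕ) : gin2' (0 : Fin (m+1)) = Fin.succ (0 : Fin (2*m+1)) := by
  apply Fin.ext; simp [gin2']
lemma gin2_succ {m : ℕ} (u : Fin m) : gin2 (Fin.succ u) = Fin.succ (Fin.succ (fin2 u)) := by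
  apply Fin.ext; simp [gin2, fin2]; omega
lemma gin2'_succ {m : ℕ} (u : Fin m) : gin2' (Fin.succ u) = Fin.succ (Fin.succ (fin2' u)) := by
  apply Fin.ext; simp [gin2', fin2']; omega

lemma gin_cover {m : ℕ} (y : Fin (2*m+1+1)) :
    (∃ k, y = gin2 k) ∨ (∃ k, y = gin2' k) := by
  rcases Nat.even_or_odd (y : ℕ) with ⟨c, hc⟩ | ⟨c, hc⟩
  · exact Or.inl ⟨⟨c, by have := y.isLt; omega⟩, by apply Fin.ext; simp [gin2]; omega⟩
  · exact Or.inr ⟨⟨c, by have := y.isLt; omega⟩, by apply Fin.ext; simp [gin2']; omega⟩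

-- the forward/backward maps
noncomputable def phi (m : ℕ) (j : Fin (2*m+1)) (σ' : Perm (Fin (2*m))) :
    Perm (Fin (2*m+1+1)) :=
  Equiv.Perm.decomposeFin.symm (0, (Fin.cycleRange j)⁻¹ * Equiv.Perm.decomposeFin.symm (0, σ'))

noncomputable def psi (m : ℕ) (σ : Perm (Fin (2*m+1+1))) :
    Fin (2*m+1) × Perm (Fin (2*m)) :=
  ((Equiv.Perm.decomposeFin σ).2 0,
    (Equiv.Perm.decomposeFin
      ((Fin.cycleRange ((Equiv.Perm.decomposeFin σ).2 0)) * (Equiv.Perm.decomposeFin σ).2)).2)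

lemma phi_zero (m : ℕ) (j : Fin (2*m+1)) (σ' : Perm (Fin (2*m))) :
    phi m j σ' 0 = 0 := by
  simp [phi]

lemma phi_succ (m : ℕ) (j : Fin (2*m+1)) (σ' : Perm (Fin (2*m))) (x : Fin (2*m+1)) :
    phi m j σ' (Fin.succ x) =
      Fin.succ (((Fin.cycleRange j)⁻¹ * Equiv.Perm.decomposeFin.symm (0, σ')) x) := by
  simp [phi, Equiv.Perm.decomposeFin_symm_apply_succ]

lemma cyc_inv_zero {m : ℕ} (i : Fin (m+1)) : (Fin.cycleRange i)⁻¹ 0 = i := by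
  rw [Equiv.Perm.inv_def]; exact Fin.cycleRange_symm_zero i

lemma cyc_inv_succ {m : ℕ} (i : Fin (m+1)) (x : Fin m) :
    (Fin.cycleRange i)⁻¹ (Fin.succ x) = i.succAbove x := by
  rw [Equiv.Perm.inv_def]; exact Fin.cycleRange_symm_succ i x

lemma phi_one (m : ℕ) (j : Fin (2*m+1)) (σ' : Perm (Fin (2*m))) :
    phi m j σ' (Fin.succ (0 : Fin (2*m+1))) = Fin.succ j := by
  rw [phi_succ]
  simp [Equiv.Perm.mul_apply, cyc_inv_zero]

lemma phi_ss (m : ℕ) (j : Fin (2*m+1)) (σ' : Perm (Fin (2*m))) (x : Fin (2*m)) :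
    phi m j σ' (Fin.succ (Fin.succ x)) = Fin.succ (j.succAbove (σ' x)) := by
  rw [phi_succ]
  simp [Equiv.Perm.mul_apply, Equiv.Perm.decomposeFin_symm_apply_succ, cyc_inv_succ]

lemma phi_sign (m : ℕ) (j : Fin (2*m+1)) (σ' : Perm (Fin (2*m))) :
    Equiv.Perm.sign (phi m j σ') = (-1 : ℤˣ) ^ (j : ℕ) * Equiv.Perm.sign σ' := by
  rw [phi, Equiv.Perm.decomposeFin.symm_sign, if_pos rfl, one_mul, map_mul,
    Equiv.Perm.sign_inv, Fin.sign_cycleRange, Equiv.Perm.decomposeFin.symm_sign,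
    if_pos rfl, one_mul]

lemma psi_phi (m : ℕ) (j : Fin (2*m+1)) (σ' : Perm (Fin (2*m))) :
    psi m (phi m j σ') = (j, σ') := by
  have h1 : (Equiv.Perm.decomposeFin (phi m j σ')).2
      = (Fin.cycleRange j)⁻¹ * Equiv.Perm.decomposeFin.symm (0, σ') := by
    rw [phi, Equiv.apply_symm_apply]
  have h2 : ((Fin.cycleRange j)⁻¹ * Equiv.Perm.decomposeFin.symm (0, σ')) 0 = j := by
    simp [Equiv.Perm.mul_apply, cyc_inv_zero]
  rw [psi, h1, h2, mul_inv_cancel_left, Equiv.apply_symm_apply]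

lemma decomposeFin_fst {n : ℕ} (σ : Perm (Fin (n+1))) :
    (Equiv.Perm.decomposeFin σ).1 = σ 0 := by
  conv_rhs => rw [← Equiv.symm_apply_apply Equiv.Perm.decomposeFin σ,
    ← Prod.mk.eta (p := Equiv.Perm.decomposeFin σ)]
  rw [Equiv.Perm.decomposeFin_symm_apply_zero]

lemma sigma_zero {m : ℕ} (σ : Perm (Fin (2*m+1+1)))
    (h1 : ∀ k : Fin (m+1), σ (gin2 k) < σ (gin2' k))
    (h2 : ∀ k l : Fin (m+1), k < l → σ (gin2 k) < σ (gin2 l)) :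
    σ (0 : Fin (2*m+1+1)) = 0 := by
  have h0 : σ (σ.symm 0) = 0 := Equiv.apply_symm_apply σ 0
  rcases gin_cover (σ.symm 0) with ⟨k, hk⟩ | ⟨k, hk⟩
  · rw [hk] at h0
    rcases (Fin.zero_le k).lt_or_eq with h | h
    · exact absurd (h0 ▸ h2 0 k h) (by rw [gin2_zero]; exact fun hh => Fin.not_lt_zero _ hh)
    · rw [← h, gin2_zero] at h0; exact h0
  · rw [hk] at h0
    exact absurd (h0 ▸ h1 k) (fun hh => Fin.not_lt_zero _ hh)

lemma phi_psi {m : ℕ} (σ : Perm (Fin (2*m+1+1))) (h0 : σ 0 = 0) :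
    phi m (psi m σ).1 (psi m σ).2 = σ := by
  set σ₁ := (Equiv.Perm.decomposeFin σ).2 with hσ₁
  have hσ : σ = Equiv.Perm.decomposeFin.symm (0, σ₁) := by
    conv_lhs => rw [← Equiv.symm_apply_apply Equiv.Perm.decomposeFin σ,
      ← Prod.mk.eta (p := Equiv.Perm.decomposeFin σ)]
    rw [decomposeFin_fst, h0, hσ₁]
  set j := σ₁ 0 with hj
  have hρ0 : (Fin.cycleRange j * σ₁) 0 = 0 := by
    simp [Equiv.Perm.mul_apply, ← hj, Fin.cycleRange_self]
  have hρ : Fin.cycleRange j * σ₁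
      = Equiv.Perm.decomposeFin.symm (0, (Equiv.Perm.decomposeFin (Fin.cycleRange j * σ₁)).2) := by
    conv_lhs => rw [← Equiv.symm_apply_apply Equiv.Perm.decomposeFin (Fin.cycleRange j * σ₁),
      ← Prod.mk.eta (p := Equiv.Perm.decomposeFin (Fin.cycleRange j * σ₁))]
    rw [decomposeFin_fst, hρ0]
  rw [phi, psi, ← hσ₁, ← hj, ← hρ, inv_mul_cancel_left, ← hσ]

lemma phi_mem_iff (m : ℕ) (j : Fin (2*m+1)) (σ' : Perm (Fin (2*m))) :
    ((∀ k : Fin (m+1), phi m j σ' (gin2 k) < phi m j σ' (gin2' k)) ∧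
      ∀ k l : Fin (m+1), k < l → phi m j σ' (gin2 k) < phi m j σ' (gin2 l)) ↔
    ((∀ k : Fin m, σ' (fin2 k) < σ' (fin2' k)) ∧
      ∀ k l : Fin m, k < l → σ' (fin2 k) < σ' (fin2 l)) := by
  constructor
  · rintro ⟨h1, h2⟩
    refine ⟨fun u => ?_, fun u v huv => ?_⟩
    · have := h1 (Fin.succ u)
      rw [gin2_succ, gin2'_succ, phi_ss, phi_ss, Fin.succ_lt_succ_iff,
        Fin.succAbove_lt_succAbove_iff] at this
      exact this
    · have := h2 (Fin.succ u) (Fin.succ v) (Fin.succ_lt_succ_iff.mpr huv)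
      rw [gin2_succ, gin2_succ, phi_ss, phi_ss, Fin.succ_lt_succ_iff,
        Fin.succAbove_lt_succAbove_iff] at this
      exact this
  · rintro ⟨h1, h2⟩
    constructor
    · intro k
      refine Fin.cases ?_ (fun u => ?_) k
      · rw [gin2_zero, gin2'_zero, phi_zero, phi_one]
        exact Fin.succ_pos j
      · rw [gin2_succ, gin2'_succ, phi_ss, phi_ss, Fin.succ_lt_succ_iff,
          Fin.succAbove_lt_succAbove_iff]
        exact h1 u
    · intro k l hkl
      have hl : l ≠ 0 := Fin.pos_iff_ne_zero.mp (lt_of_le_of_lt (Fin.zero_le k) hkl)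
      obtain ⟨v, rfl⟩ := Fin.exists_succ_eq.mpr hl
      refine Fin.cases ?_ (fun u hu => ?_) k hkl
      · intro _
        rw [gin2_zero, gin2_succ, phi_zero, phi_ss]
        exact Fin.succ_pos _
      · rw [gin2_succ, gin2_succ, phi_ss, phi_ss, Fin.succ_lt_succ_iff,
          Fin.succAbove_lt_succAbove_iff]
        exact h2 u v (Fin.succ_lt_succ_iff.mp hu)

theorem PfS_succ {R : Type*} [CommRing R] (m : ℕ) (a : Fin (2*m+1+1) → Fin (2*m+1+1) → R) :
    PfS m a = ∑ j : Fin (2*m+1),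
      (-1 : R) ^ (j : ℕ) * a 0 (Fin.succ j) *
        Pf m (fun p q => a (Fin.succ (j.succAbove p)) (Fin.succ (j.succAbove q))) := by
  rw [PfS]
  simp only [Pf, Finset.mul_sum, ← Finset.sum_product']
  refine Finset.sum_nbij' (fun σ => psi m σ) (fun p => phi m p.1 p.2) ?_ ?_ ?_ ?_ ?_
  · intro σ hσ
    rw [Finset.mem_filter] at hσ
    have hrec : phi m (psi m σ).1 (psi m σ).2 = σ :=
      phi_psi σ (by rw [← gin2_zero]; exact sigma_zero σ hσ.2.1 hσ.2.2)
    rw [Finset.mem_product, Finset.mem_filter]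
    refine ⟨Finset.mem_univ _, Finset.mem_univ _, ?_⟩
    rw [← hrec] at hσ
    exact (phi_mem_iff m _ _).mp hσ.2
  · intro p hp
    rw [Finset.mem_product, Finset.mem_filter] at hp
    rw [Finset.mem_filter]
    exact ⟨Finset.mem_univ _, (phi_mem_iff m p.1 p.2).mpr hp.2.2⟩
  · intro σ hσ
    rw [Finset.mem_filter] at hσ
    exact phi_psi σ (by rw [← gin2_zero]; exact sigma_zero σ hσ.2.1 hσ.2.2)
  · intro p _
    rw [psi_phi]
  · intro σ hσ
    rw [Finset.mem_filter] at hσ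
    have hrec : phi m (psi m σ).1 (psi m σ).2 = σ :=
      phi_psi σ (by rw [← gin2_zero]; exact sigma_zero σ hσ.2.1 hσ.2.2)
    rcases hps : psi m σ with ⟨j, σ'⟩
    dsimp only at hrec ⊢
    rw [← hrec]
    rw [phi_sign, Fin.prod_univ_succ, gin2_zero, gin2'_zero, phi_zero, phi_one]
    simp only [gin2_succ, gin2'_succ, phi_ss]
    simp only [zsmul_eq_mul, Units.val_mul, Units.val_pow_eq_pow_val, Units.val_neg,
      Units.val_one]
    push_cast
    rw [hps]
    ring

theorem Pf_succ {R : Type*} [CommRing R] (m : ℕ) (a : Fin (2*(m+1)) → Fin (2*(m+1)) → R) :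
    Pf (m+1) a = ∑ j : Fin (2*m+1),
      (-1 : R) ^ (j : ℕ) * a 0 (Fin.succ j) *
        Pf m (fun p q => a (Fin.succ (j.succAbove p)) (Fin.succ (j.succAbove q))) := by
  rw [Pf_eq_PfS, PfS_succ]

theorem Pf_one {R : Type*} [CommRing R] (a : Fin (2*1) → Fin (2*1) → R) :
    Pf 1 a = a ⟨0, by omega⟩ ⟨1, by omega⟩ := by
  rw [Pf]
  have hfil : (Finset.univ.filter (fun σ : Equiv.Perm (Fin (2*1)) =>
      (∀ k : Fin 1, σ (fin2 k) < σ (fin2' k)) ∧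
      ∀ k l : Fin 1, k < l → σ (fin2 k) < σ (fin2 l))) = {1} := by
    ext σ
    simp only [Finset.mem_filter, Finset.mem_univ, true_and, Finset.mem_singleton]
    constructor
    · rintro ⟨h1, _⟩
      have h := h1 0
      have e0 : (σ (fin2 0) : ℕ) < (σ (fin2' 0) : ℕ) := h
      have l0 : (σ (fin2 0) : ℕ) < 2*1 := (σ (fin2 0)).isLt
      have l1 : (σ (fin2' 0) : ℕ) < 2*1 := (σ (fin2' 0)).isLt
      have hv0 : σ (fin2 0) = fin2 0 := by apply Fin.ext; simp [fin2] at *; omega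
      have hv1 : σ (fin2' 0) = fin2' 0 := by apply Fin.ext; simp [fin2, fin2'] at *; omega
      apply Equiv.ext
      intro y
      rcases gin_cover (m := 0) y with ⟨k, hk⟩ | ⟨k, hk⟩
      · have hk0 : k = 0 := Fin.eq_zero k
        subst hk0
        have : y = fin2 (0 : Fin 1) := by rw [hk]; apply Fin.ext; simp [gin2, fin2]
        rw [this, hv0]; rfl
      · have hk0 : k = 0 := Fin.eq_zero k
        subst hk0
        have : y = fin2' (0 : Fin 1) := by rw [hk]; apply Fin.ext; simp [gin2', fin2']
        rw [this, hv1]; rfl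
    · rintro rfl
      refine ⟨fun k => ?_, fun k l hkl => ?_⟩
      · simp only [Equiv.Perm.one_apply]
        simp [fin2, fin2', Fin.lt_def]
      · exact absurd hkl (by have := k.isLt; have := l.isLt; omega)
  rw [hfil, Finset.sum_singleton]
  simp only [map_one, Units.val_one, one_smul]
  rw [show (Finset.univ : Finset (Fin 1)) = {0} from rfl, Finset.prod_singleton]
  congr 1 <;> apply Fin.ext <;> simp [fin2, fin2']

lemma prod_Ioi_castSucc {M : Type*} [CommMonoid M] {n : ℕ} (i : Fin n) (v : Fin (n+1) → M) :
    ∏ j ∈ Finset.Ioi (Fin.castSucc i), v j =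
      (∏ j ∈ Finset.Ioi i, v (Fin.castSucc j)) * v (Fin.last n) := by
  have hset : Finset.Ioi (Fin.castSucc i)
      = insert (Fin.last n) ((Finset.Ioi i).map Fin.castSuccEmb) := by
    ext y
    simp only [Finset.mem_Ioi, Finset.mem_insert, Finset.mem_map, Fin.coe_castSuccEmb]
    constructor
    · intro hy
      by_cases hl : y = Fin.last n
      · exact Or.inl hl
      · have hv : (y : ℕ) < n := by
          have h1 := y.isLt
          have h2 : (y : ℕ) ≠ n := fun h => hl (Fin.ext (by simp [h, Fin.last]))
          omega
        refine Or.inr ⟨⟨(y : ℕ), hv⟩, ?_, ?_⟩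
        · rw [Fin.lt_def] at hy ⊢
          simpa using hy
        · apply Fin.ext; simp
    · rintro (rfl | ⟨k, hk, rfl⟩)
      · exact Fin.castSucc_lt_last i
      · exact Fin.castSucc_lt_castSucc_iff.mpr hk
  rw [hset, Finset.prod_insert, Finset.prod_map]
  · exact mul_comm _ _
  · simp only [Finset.mem_map, Fin.coe_castSuccEmb]
    rintro ⟨k, _, hk⟩
    exact absurd hk (Fin.castSucc_lt_last k).ne

lemma Afun_succ {n : ℕ} (α : Fin (n+1) → ℂ) :
    Afun α = (∏ j : Fin n, (α 0 + α (Fin.succ j)) / (α 0 - α (Fin.succ j))) *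
      Afun (fun j => α (Fin.succ j)) := by
  rw [Afun, Fin.prod_univ_succ]
  congr 1
  · exact Fin.prod_Ioi_zero _
  · rw [Afun]
    exact Finset.prod_congr rfl (fun i _ => Fin.prod_Ioi_succ _ i)

lemma Afun_castSucc {n : ℕ} (α : Fin (n+1) → ℂ) :
    Afun α = Afun (fun j => α (Fin.castSucc j)) *
      ∏ j : Fin n, (α (Fin.castSucc j) + α (Fin.last n)) /
        (α (Fin.castSucc j) - α (Fin.last n)) := by
  rw [Afun, Fin.prod_univ_castSucc]
  have hempty : Finset.Ioi (Fin.last n) = ∅ := by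
    ext y
    simp only [Finset.mem_Ioi, Finset.notMem_empty, iff_false, not_lt]
    exact Fin.le_last y
  rw [hempty, Finset.prod_empty, mul_one]
  rw [show (∏ i : Fin n, ∏ j ∈ Finset.Ioi (Fin.castSucc i),
        (α (Fin.castSucc i) + α j) / (α (Fin.castSucc i) - α j))
      = ∏ i : Fin n, ((∏ j ∈ Finset.Ioi i,
          (α (Fin.castSucc i) + α (Fin.castSucc j)) / (α (Fin.castSucc i) - α (Fin.castSucc j))) *
        ((α (Fin.castSucc i) + α (Fin.last n)) / (α (Fin.castSucc i) - α (Fin.last n))))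
      from Finset.prod_congr rfl (fun i _ => prod_Ioi_castSucc i _)]
  rw [Finset.prod_mul_distrib, Afun]

def rotl (n : ℕ) : Equiv.Perm (Fin (n+1)) := (Fin.cycleRange (Fin.last n))⁻¹

lemma rotl_zero (n : ℕ) : rotl n 0 = Fin.last n := cyc_inv_zero _

lemma rotl_succ (n : ℕ) (x : Fin n) : rotl n (Fin.succ x) = Fin.castSucc x := by
  rw [rotl, cyc_inv_succ, Fin.succAbove_last]

lemma neg_quot (a b : ℂ) : (a + b)/(a - b) = -((b + a)/(b - a)) := by
  rw [show a - b = -(b - a) by ring, div_neg, add_comm]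

lemma prod_neg_fin {n : ℕ} (f : Fin n → ℂ) :
    ∏ j : Fin n, (-(f j)) = (-1 : ℂ)^n * ∏ j : Fin n, f j := by
  rw [show (∏ j : Fin n, (-(f j))) = ∏ j : Fin n, ((-1) * f j)
      from Finset.prod_congr rfl (fun j _ => by ring)]
  rw [Finset.prod_mul_distrib, Finset.prod_const, Finset.card_univ, Fintype.card_fin]

lemma Afun_rot {n : ℕ} (α : Fin (n+1) → ℂ) :
    Afun (fun i => α (rotl n i)) = (-1 : ℂ)^n * Afun α := by
  rw [Afun_succ]
  simp only [rotl_zero, rotl_succ]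
  rw [show (∏ j : Fin n, (α (Fin.last n) + α (Fin.castSucc j)) /
        (α (Fin.last n) - α (Fin.castSucc j)))
      = ∏ j : Fin n, -((α (Fin.castSucc j) + α (Fin.last n)) /
        (α (Fin.castSucc j) - α (Fin.last n)))
      from Finset.prod_congr rfl (fun j _ => neg_quot _ _)]
  rw [prod_neg_fin, Afun_castSucc (α := α)]
  ring

lemma Afun_ne_zero {n : ℕ} (α : Fin n → ℂ) (hinj : Function.Injective α)
    (hsum : ∀ i j, i < j → α i + α j ≠ 0) : Afun α ≠ 0 := by
  rw [Afun]
  apply Finset.prod_ne_zero_iff.mpr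
  intro i _
  apply Finset.prod_ne_zero_iff.mpr
  intro j hj
  rw [Finset.mem_Ioi] at hj
  exact div_ne_zero (hsum i j hj) (sub_ne_zero.mpr (hinj.ne hj.ne))

lemma Afun_two (β : Fin (2*1) → ℂ) :
    Afun β = (β ⟨0, by omega⟩ + β ⟨1, by omega⟩) / (β ⟨0, by omega⟩ - β ⟨1, by omega⟩) := by
  rw [Afun]
  rw [show (Finset.univ : Finset (Fin (2*1))) = {⟨0, by omega⟩, ⟨1, by omega⟩} from rfl]
  rw [Finset.prod_insert (by decide), Finset.prod_singleton]
  rw [show (Finset.Ioi (⟨0, by omega⟩ : Fin (2*1))) = {⟨1, by omega⟩} from by decide]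
  rw [show (Finset.Ioi (⟨1, by omega⟩ : Fin (2*1))) = (∅ : Finset (Fin (2*1))) from by decide]
  rw [Finset.prod_singleton, Finset.prod_empty, mul_one]

lemma PfEven_one (τ : TSeq → ℂ) (hτ : ∀ x, τ x ≠ 0) (x : TSeq) (β : Fin (2*1) → ℂ)
    (hinj : Function.Injective β) (hsum : ∀ i j, i < j → β i + β j ≠ 0) :
    BKPPfEven τ x 1 β := by
  rw [BKPPfEven, Pf_one, Afun_two]
  set b0 := β ⟨0, by omega⟩
  set b1 := β ⟨1, by omega⟩
  have h01 : (⟨0, by omega⟩ : Fin (2*1)) < ⟨1, by omega⟩ := by simp [Fin.lt_def]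
  have hne : b0 - b1 ≠ 0 := sub_ne_zero.mpr (hinj.ne h01.ne)
  have hne' : b0 + b1 ≠ 0 := hsum _ _ h01
  rw [show (∑ i, chB (β i)) = chB b0 + chB b1 by
    rw [show (Finset.univ : Finset (Fin (2*1))) = {⟨0, by omega⟩, ⟨1, by omega⟩} from rfl]
    rw [Finset.sum_insert (by decide), Finset.sum_singleton]]
  rw [pt, show x + (chB b0 + chB b1) = x + chB b0 + chB b1 from (add_assoc x _ _).symm]
  rw [← mul_assoc, show (b0 + b1)/(b0 - b1) * ((b0 - b1)/(b0 + b1)) = 1 from by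
    field_simp, one_mul]

lemma neg_quot' (a b : ℂ) : (a - b)/(a + b) = -((b - a)/(b + a)) := by
  rw [show a - b = -(b - a) by ring, neg_div, add_comm]

end BKPaux

open BKPaux in
/-- Proposition 9: the BKP Pfaffian formulae imply the BKP addition
formulae (53) (odd `n`) and (54) (even `n`). -/
theorem BKP_pfaffianFormulae_imply_additionFormulae (τ : TSeq → ℂ) (hτ : ∀ x, τ x ≠ 0)
    (hOdd : ∀ (m : ℕ), 1 ≤ m → ∀ (x : TSeq) (α : Fin (2*m+1) → ℂ),
      Function.Injective α → (∀ i j, i < j → α i + α j ≠ 0) → BKPPfOdd τ x m α)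
    (hEven : ∀ (m : ℕ), 2 ≤ m → ∀ (x : TSeq) (α : Fin (2*m) → ℂ),
      Function.Injective α → (∀ i j, i < j → α i + α j ≠ 0) → BKPPfEven τ x m α) :
    (∀ (m : ℕ), 1 ≤ m → ∀ (x : TSeq) (α : Fin (2*m+1) → ℂ),
      Function.Injective α → (∀ i j, i < j → α i + α j ≠ 0) → BKPAddOdd τ x m α) ∧
    (∀ (m : ℕ), 1 ≤ m → ∀ (x : TSeq) (α : Fin (2*m+2) → ℂ),
      Function.Injective α → (∀ i j, i < j → α i + α j ≠ 0) → BKPAddEven τ x m α) := by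
  have hEven' : ∀ (m : ℕ), 1 ≤ m → ∀ (x : TSeq) (α : Fin (2*m) → ℂ),
      Function.Injective α → (∀ i j, i < j → α i + α j ≠ 0) → BKPPfEven τ x m α := by
    intro m hm x α hinj hsum
    rcases Nat.lt_or_ge m 2 with h | h
    · interval_cases m
      exact PfEven_one τ hτ x α hinj hsum
    · exact hEven m h x α hinj hsum
  have hPfminor : ∀ (m : ℕ), 1 ≤ m → ∀ (x : TSeq) (β : Fin (2*m) → ℂ),
      Function.Injective β → (∀ i j, i < j → β i + β j ≠ 0) →
      Pf m (fun p q => pt τ x (some (β p)) (some (β q)))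
        = (Afun β)⁻¹ * (τ (x + ∑ i, chB (β i)) / τ x) := by
    intro m hm x β hinj hsum
    have h := hEven' m hm x β hinj hsum
    rw [BKPPfEven] at h
    rw [h, inv_mul_cancel_left₀ (Afun_ne_zero β hinj hsum)]
  constructor
  · -- odd case
    intro m hm x α hinj hsum
    have hA : Afun α ≠ 0 := Afun_ne_zero α hinj hsum
    have hodd := hOdd m hm x α hinj hsum
    rw [BKPPfOdd, Pf_succ] at hodd
    have hodd2 : τ (x + ∑ i, chB (α i)) / τ x
        = Afun α * ∑ j : Fin (2*m+1), (-1:ℂ)^(j:ℕ) * (τ (x + chB (α j)) / τ x) *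
            Pf m (fun p q => pt τ x (some (α (j.succAbove p))) (some (α (j.succAbove q)))) :=
      hodd
    simp only [BKPAddOdd]
    rw [sub_eq_zero, hodd2, inv_mul_cancel_left₀ hA]
    refine Finset.sum_congr rfl (fun j _ => ?_)
    rw [hPfminor m hm x (fun u => α (j.succAbove u))
      (hinj.comp (Fin.succAbove_right_injective))
      (fun p q hpq => hsum _ _ (Fin.succAbove_lt_succAbove_iff.mpr hpq))]
    ring
  · -- even case
    intro m hm x α hinj hsum
    have hA : Afun α ≠ 0 := Afun_ne_zero α hinj hsum
    have hsum' : ∀ i j : Fin (2*m+2), i ≠ j → α i + α j ≠ 0 := by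
      intro i j hij
      rcases lt_or_gt_of_ne hij with h | h
      · exact hsum i j h
      · rw [add_comm]; exact hsum j i h
    set g : Equiv.Perm (Fin (2*m+1+1)) := rotl (2*m+1) with hg
    have hbinj : Function.Injective (fun i => α (g i)) := hinj.comp g.injective
    have hbsum : ∀ i j : Fin (2*(m+1)), i < j → α (g i) + α (g j) ≠ 0 := by
      intro i j hij
      exact hsum' _ _ (fun h => hij.ne (g.injective h))
    have hb := hEven (m+1) (by omega) x (fun i => α (g i)) hbinj hbsum
    rw [BKPPfEven, Pf_succ] at hb
    have hb2 : τ (x + ∑ i, chB (α (g i))) / τ x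
        = Afun (fun i => α (g i)) * ∑ j : Fin (2*m+1), (-1:ℂ)^(j:ℕ) *
            pt τ x (some (α (g 0))) (some (α (g (Fin.succ j)))) *
            Pf m (fun p q => pt τ x (some (α (g (Fin.succ (j.succAbove p)))))
              (some (α (g (Fin.succ (j.succAbove q)))))) := hb
    rw [show (∑ i, chB (α (g i))) = ∑ i, chB (α i) from Equiv.sum_comp g (fun i => chB (α i))]
      at hb2
    rw [hg] at hb2
    simp only [rotl_zero, rotl_succ] at hb2
    have hAβ : Afun (fun i => α (rotl (2*m+1) i)) = -Afun α := by
      rw [Afun_rot, show ((-1:ℂ))^(2*m+1) = -1 from Odd.neg_one_pow ⟨m, by ring⟩]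
      ring
    rw [hAβ] at hb2
    have key : τ (x + ∑ i, chB (α i)) / τ x
        = Afun α * ∑ j : Fin (2*m+1), (-1:ℂ)^(j:ℕ) *
            ((α (Fin.castSucc j) - α (Fin.last (2*m+1))) /
              (α (Fin.castSucc j) + α (Fin.last (2*m+1)))) *
            (τ (x + chB (α (Fin.castSucc j)) + chB (α (Fin.last (2*m+1)))) / τ x) *
            Pf m (fun p q => pt τ x (some (α (Fin.castSucc (j.succAbove p))))
              (some (α (Fin.castSucc (j.succAbove q))))) := by
      rw [hb2, neg_mul, ← mul_neg]
      congr 1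
      rw [← Finset.sum_neg_distrib]
      refine Finset.sum_congr rfl (fun j _ => ?_)
      simp only [pt]
      rw [show x + chB (α (Fin.last (2*m+1))) + chB (α (Fin.castSucc j))
          = x + chB (α (Fin.castSucc j)) + chB (α (Fin.last (2*m+1))) from add_right_comm x _ _]
      rw [neg_quot' (α (Fin.last (2*m+1))) (α (Fin.castSucc j))]
      ring
    simp only [BKPAddEven]
    rw [sub_eq_zero, key, inv_mul_cancel_left₀ hA]
    refine Finset.sum_congr rfl (fun j _ => ?_)
    rw [hPfminor m hm x (fun u => α (Fin.castSucc (j.succAbove u)))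
      (hinj.comp ((Fin.castSucc_injective _).comp Fin.succAbove_right_injective))
      (fun p q hpq => hsum _ _ (Fin.castSucc_lt_castSucc_iff.mpr
        (Fin.succAbove_lt_succAbove_iff.mpr hpq)))]
    ring


end
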